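/- For the 2×2 positive column stochastic matrix M with off-diagonals M₁₂, M₂₁, the maximum of ‖Q m h‖₂² over 2×2 matrices m with columns summing to zero and Frobenius norm 1 equals (M₁₂² + M₂₁²)/(M₁₂ + M₂₁)⁴, where Q is the fundamental matrix and h the stationary vector. -/

import Mathlib

open Matrix BigOperators


lemma Ainv (M₁₂ M₂₁ : ℝ) (hs : M₁₂ + M₂₁ ≠ 0) :
    (1 - !![1 - M₂₁, M₁₂; M₂₁, 1 - M₁₂]
       + vecMulVec ![M₁₂ / (M₁₂ + M₂₁), M₂₁ / (M₁₂ + M₂₁)] (fun _ : Fin 2 => (1:ℝ)))⁻¹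
    = !![(M₁₂*(M₁₂+M₂₁)+M₂₁)/(M₁₂+M₂₁)^2, (M₁₂*(M₁₂+M₂₁)-M₁₂)/(M₁₂+M₂₁)^2;
         (M₂₁*(M₁₂+M₂₁)-M₂₁)/(M₁₂+M₂₁)^2, (M₂₁*(M₁₂+M₂₁)+M₁₂)/(M₁₂+M₂₁)^2] := by
  apply Matrix.inv_eq_right_inv
  ext i j
  fin_cases i <;> fin_cases j <;>
    simp [Matrix.mul_apply, Fin.sum_univ_two, vecMulVec_apply, Matrix.one_apply, -cons_vecMulVec, -vecMulVec_cons] <;>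
    field_simp <;> ring

lemma value_eq (M₁₂ M₂₁ : ℝ) (hs : 0 < M₁₂ + M₂₁) (m : Matrix (Fin 2) (Fin 2) ℝ)
    (hc : ∀ j, ∑ i, m i j = 0) :
    ∑ i,
      (((1 - !![1 - M₂₁, M₁₂; M₂₁, 1 - M₁₂]
          + vecMulVec ![M₁₂ / (M₁₂ + M₂₁), M₂₁ / (M₁₂ + M₂₁)]
              (fun _ : Fin 2 => (1 : ℝ)))⁻¹).mulVec
        (m.mulVec ![M₁₂ / (M₁₂ + M₂₁), M₂₁ / (M₁₂ + M₂₁)]) i) ^ 2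
    = 2 * (m 0 0 * M₁₂ + m 0 1 * M₂₁)^2 / (M₁₂ + M₂₁)^4 := by
  have hs' : (M₁₂ + M₂₁) ≠ 0 := ne_of_gt hs
  rw [Ainv M₁₂ M₂₁ hs']
  have h0 := hc 0
  have h1 := hc 1
  simp [Fin.sum_univ_two] at h0 h1
  simp [Matrix.mulVec, dotProduct, Fin.sum_univ_two]
  have e0 : m 1 0 = - m 0 0 := by linarith
  have e1 : m 1 1 = - m 0 1 := by linarith
  rw [e0, e1]
  field_simp
  ring

/-- For the positive `2×2` column stochastic matrix with off-diagonals `M₁₂, M₂₁`,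
the maximum of `‖Q m h‖₂²` over `2×2` matrices `m` with zero column sums and unit
Frobenius norm equals `(M₁₂² + M₂₁²)/(M₁₂ + M₂₁)⁴`. -/
theorem stmt_15 (M₁₂ M₂₁ : ℝ) (h12 : 0 < M₁₂) (h12' : M₁₂ < 1)
    (h21 : 0 < M₂₁) (h21' : M₂₁ < 1) :
    IsGreatest
      {x : ℝ | ∃ m : Matrix (Fin 2) (Fin 2) ℝ,
        (∀ j, ∑ i, m i j = 0) ∧ (∑ i, ∑ j, (m i j) ^ 2 = 1) ∧
        x = ∑ i,
          (((1 - !![1 - M₂₁, M₁₂; M₂₁, 1 - M₁₂]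
              + vecMulVec ![M₁₂ / (M₁₂ + M₂₁), M₂₁ / (M₁₂ + M₂₁)]
                  (fun _ : Fin 2 => (1 : ℝ)))⁻¹).mulVec
            (m.mulVec ![M₁₂ / (M₁₂ + M₂₁), M₂₁ / (M₁₂ + M₂₁)]) i) ^ 2}
      ((M₁₂ ^ 2 + M₂₁ ^ 2) / (M₁₂ + M₂₁) ^ 4) := by
  have hs : 0 < M₁₂ + M₂₁ := by linarith
  have hq : (0:ℝ) < 2 * (M₁₂^2 + M₂₁^2) := by nlinarith
  set r := Real.sqrt (2 * (M₁₂^2 + M₂₁^2)) with hr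
  have hr2 : r^2 = 2 * (M₁₂^2 + M₂₁^2) := Real.sq_sqrt hq.le
  have hrpos : 0 < r := Real.sqrt_pos.mpr hq
  constructor
  · refine ⟨!![M₁₂/r, M₂₁/r; -(M₁₂/r), -(M₂₁/r)], ?_, ?_, ?_⟩
    · intro j; fin_cases j <;> simp [Fin.sum_univ_two]
    · simp [Fin.sum_univ_two]
      field_simp
      nlinarith [hr2]
    · rw [value_eq M₁₂ M₂₁ hs _ (by intro j; fin_cases j <;> simp [Fin.sum_univ_two])]
      rw [show (!![M₁₂/r, M₂₁/r; -(M₁₂/r), -(M₂₁/r)] : Matrix (Fin 2) (Fin 2) ℝ) 0 0 = M₁₂/r by simp,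
          show (!![M₁₂/r, M₂₁/r; -(M₁₂/r), -(M₂₁/r)] : Matrix (Fin 2) (Fin 2) ℝ) 0 1 = M₂₁/r by simp]
      rw [div_eq_div_iff (by positivity) (by positivity)]
      field_simp
      rw [hr2]; ring
  · rintro x ⟨m, hc, hn, rfl⟩
    rw [value_eq M₁₂ M₂₁ hs m hc]
    have h0 := hc 0
    have h1 := hc 1
    simp [Fin.sum_univ_two] at h0 h1 hn
    have e0 : m 1 0 = - m 0 0 := by linarith
    have e1 : m 1 1 = - m 0 1 := by linarith
    rw [e0, e1] at hn
    rw [div_le_div_iff₀ (by positivity) (by positivity)]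
    have hab : m 0 0^2 + m 0 1^2 = 1/2 := by linarith
    have key : 2*(m 0 0*M₁₂+m 0 1*M₂₁)^2 ≤ M₁₂^2+M₂₁^2 := by
      nlinarith [sq_nonneg (m 0 0*M₂₁ - m 0 1*M₁₂)]
    have := mul_le_mul_of_nonneg_right key (pow_pos hs 4).le
    linarith
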